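/- Let n = 1 and m ≥ 1, so V = ℂ², V_1 = ℂe_1, and W = S^m(ℂ²). Suppose α : 𝔭 → W is conjugate-ℂ-linear (α(ξ_{iv}) = −i·α(ξ_v) for all v ∈ ℂ) and satisfies (i) ρ_m(ξ_u)α(ξ_v) = ρ_m(ξ_v)α(ξ_u) for all u, v ∈ ℂ, and (ii) ρ_m(ξ_1)α(ξ_1) + ρ_m(ξ_i)α(ξ_i) = 0. Then α takes values in the top component W_m = ℂ·e_1^m, i.e. P_k(α(ξ_v)) = 0 for all v ∈ ℂ and all 0 ≤ k ≤ m−1. -/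

import Mathlib

open MvPolynomial

noncomputable section

/-- The matrix `ξ_v⁺ = [[0, v],[0, 0]]` in block form. -/
def xiP (n : ℕ) (v : Fin n → ℂ) : Matrix (Fin (n+1)) (Fin (n+1)) ℂ :=
  Matrix.of fun i j => if h : (i : ℕ) < n ∧ j = Fin.last n then v ⟨i, h.1⟩ else 0

/-- The matrix `ξ_v⁻ = [[0, 0],[v*, 0]]` in block form. -/
def xiM (n : ℕ) (v : Fin n → ℂ) : Matrix (Fin (n+1)) (Fin (n+1)) ℂ :=
  Matrix.of fun i j =>
    if h : i = Fin.last n ∧ (j : ℕ) < n then (starRingEnd ℂ) (v ⟨j, h.2⟩) else 0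

/-- The matrix `ξ_v = [[0, v],[v*, 0]]` in block form. -/
def xi (n : ℕ) (v : Fin n → ℂ) : Matrix (Fin (n+1)) (Fin (n+1)) ℂ := xiP n v + xiM n v

/-- The derived representation of `gl(n+1, ℂ)` on `W = S^m(ℂ^{n+1})`, realized on
the polynomial ring `ℂ[x_1, …, x_{n+1}]` (a vector `v` corresponds to the linear
form `Σ v_i x_i` and the symmetric product to the product of polynomials, so that
`(u+w)^j = Σ binom(j,i) u^i w^{j-i}`); it acts by derivations. -/
def rho (n : ℕ) (M : Matrix (Fin (n+1)) (Fin (n+1)) ℂ) :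
    MvPolynomial (Fin (n+1)) ℂ →ₗ[ℂ] MvPolynomial (Fin (n+1)) ℂ :=
  ∑ i, ∑ j, M j i • ((LinearMap.mulLeft ℂ (X j)) ∘ₗ (pderiv i).toLinearMap)

/-- The component `W_k = S^k(V_1)·e_{n+1}^{m-k}` of `W = S^m(ℂ^{n+1})`: the span of
monomials of total degree `m` with degree `m - k` in the last variable. -/
def Wcomp (n m k : ℕ) : Submodule ℂ (MvPolynomial (Fin (n+1)) ℂ) :=
  Submodule.span ℂ {p | ∃ d : Fin (n+1) →₀ ℕ,
    (∑ i, d i) = m ∧ d (Fin.last n) = m - k ∧ p = monomial d 1}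

/-- Explicit form of `rho 1 (xi 1 v)`. -/
lemma rho_xi_apply (v : Fin 1 → ℂ) (p : MvPolynomial (Fin 2) ℂ) :
    rho 1 (xi 1 v) p
      = v 0 • (X 0 * pderiv 1 p) + (starRingEnd ℂ) (v 0) • (X 1 * pderiv 0 p) := by
  simp [rho, Fin.sum_univ_two, xi, xiP, xiM, Matrix.of_apply, Fin.last,
    LinearMap.add_apply, LinearMap.smul_apply, LinearMap.comp_apply, LinearMap.mulLeft_apply]
  abel

/-- Coefficients of a partial derivative. -/
lemma coeff_pderiv' {σ : Type*} [DecidableEq σ] (i : σ) (d : σ →₀ ℕ)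
    (p : MvPolynomial σ ℂ) :
    coeff d (pderiv i p) = (d i + 1) * coeff (d + Finsupp.single i 1) p := by
  induction p using MvPolynomial.induction_on' with
  | add p q hp hq => simp [hp, hq, mul_add]
  | monomial s a =>
    rw [pderiv_monomial, coeff_monomial, coeff_monomial]
    split_ifs with h1 h2 h2
    · subst h2; simp; ring
    · rcases Nat.eq_zero_or_pos (s i) with h | h
      · simp [h]
      · exact absurd (by rw [← h1,
          tsub_add_cancel_of_le (by simpa [Finsupp.single_le_iff] using Nat.succ_le_of_lt h)]) h2
    · exact absurd (by rw [h2, add_tsub_cancel_right]) h1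
    · ring

/-- The Riemann surface case `n = 1`: if `α : 𝔭 → W = S^m(ℂ²)` is ℝ-linear,
conjugate-ℂ-linear, symmetric and trace free, then `α` takes values in the top
component `W_m = ℂ·e_1^m`: all coefficients of `e_1^k e_2^{m-k}` with
`k ≤ m - 1` vanish. -/
theorem riemann_surface_case (m : ℕ) (hm : 1 ≤ m)
    (α : (Fin 1 → ℂ) → MvPolynomial (Fin 2) ℂ)
    (hW : ∀ v, α v ∈ homogeneousSubmodule (Fin 2) ℂ m)
    (hadd : ∀ u v, α (u + v) = α u + α v)
    (hsmul : ∀ (r : ℝ) (v : Fin 1 → ℂ), α ((r : ℂ) • v) = (r : ℂ) • α v)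
    (hconj : ∀ v, α (Complex.I • v) = (-Complex.I) • α v)
    (hsym : ∀ u v, rho 1 (xi 1 u) (α v) = rho 1 (xi 1 v) (α u))
    (htr : rho 1 (xi 1 (fun _ => 1)) (α (fun _ => 1))
        + rho 1 (xi 1 (fun _ => Complex.I)) (α (fun _ => Complex.I)) = 0) :
    ∀ (v : Fin 1 → ℂ) (k : ℕ), k ≤ m - 1 →
      coeff (Finsupp.single (0 : Fin 2) k + Finsupp.single (1 : Fin 2) (m - k))
        (α v) = 0 := by
  intro v k hk
  set β := α (fun _ => 1) with hβ
  have hIvec : (fun _ : Fin 1 => Complex.I) = Complex.I • (fun _ => (1:ℂ)) := by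
    funext j; simp
  have hI : α (fun _ => Complex.I) = (-Complex.I) • β := by rw [hIvec, hconj]
  -- the trace condition forces `X 0 * ∂₁ β = 0`, hence `∂₁ β = 0`
  have key : pderiv (1 : Fin 2) β = 0 := by
    rw [hI, map_smul, rho_xi_apply, rho_xi_apply] at htr
    simp only [smul_add, smul_smul, map_one, one_smul, Complex.conj_I, mul_neg, neg_mul,
      neg_neg, Complex.I_mul_I, one_smul, neg_one_smul, neg_smul, smul_neg] at htr
    have h2 : (2 : MvPolynomial (Fin 2) ℂ) * (X 0 * pderiv 1 β) = 0 := by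
      linear_combination htr
    have h3 : X (0 : Fin 2) * pderiv 1 β = 0 := by
      rcases mul_eq_zero.mp h2 with h | h
      · exact absurd h two_ne_zero
      · exact h
    rcases mul_eq_zero.mp h3 with h | h
    · exact absurd h (X_ne_zero 0)
    · exact h
  -- hence all coefficients of monomials containing the second variable vanish
  have hcoeff : coeff (Finsupp.single (0 : Fin 2) k + Finsupp.single (1 : Fin 2) (m - k))
      β = 0 := by
    have e : Finsupp.single (0 : Fin 2) k + Finsupp.single (1 : Fin 2) (m - k)
        = (Finsupp.single (0 : Fin 2) k + Finsupp.single (1 : Fin 2) (m - k - 1))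
          + Finsupp.single (1 : Fin 2) 1 := by
      have hmk : m - k = (m - k - 1) + 1 := by omega
      rw [add_assoc, ← Finsupp.single_add, ← hmk]
    have h := coeff_pderiv' (1 : Fin 2)
      (Finsupp.single (0 : Fin 2) k + Finsupp.single (1 : Fin 2) (m - k - 1)) β
    rw [key] at h
    have h1 : ((Finsupp.single (0 : Fin 2) k + Finsupp.single (1 : Fin 2) (m - k - 1))
        (1 : Fin 2)) = m - k - 1 := by simp
    rw [h1, coeff_zero] at h
    rw [e]
    exact (mul_eq_zero.mp h.symm).resolve_left (Nat.cast_add_one_ne_zero (m - k - 1))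
  -- conjugate-linearity: `α v = conj (v 0) • β`
  have hc : (starRingEnd ℂ) (v 0)
      = ((v 0).re : ℂ) + ((v 0).im : ℂ) * (-Complex.I) := by
    apply Complex.ext <;> simp
  have hv : v = ((v 0).re : ℂ) • (fun _ => (1:ℂ)) + ((v 0).im : ℂ) • (fun _ => Complex.I) := by
    funext j
    have : j = 0 := Subsingleton.elim j 0
    subst this
    simp only [Pi.add_apply, Pi.smul_apply, smul_eq_mul, mul_one]
    exact (Complex.re_add_im (v 0)).symm
  have hαv : α v = (starRingEnd ℂ) (v 0) • β := by
    conv_lhs => rw [hv]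
    rw [hadd, hsmul, hsmul, hI, ← hβ, hc, add_smul, mul_smul]
  rw [hαv, coeff_smul, hcoeff, smul_zero]

end
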